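/- Let A be a unital complex Banach algebra, f, i, D, I ∈ A, M = T(f,i) = ![![f, 0], ![i, f]] and P = T(D,I) = ![![D, 0], ![I, D]] in Matrix (Fin 2) (Fin 2) A. Set ρ = −∑'_{l : ℕ} ((l+1)! : ℂ)⁻¹ • (ad f)^[l] i, where (ad f)^[l] denotes the l-th iterate of the map x ↦ ⁅f, x⁆. Then exp(M) * P * exp(−M) = ![![exp f * D * exp(−f), 0], ![exp f * I * exp(−f) + ⁅exp f * D * exp(−f), ρ⁆, exp f * D * exp(−f)]]. (This is the formula e^{ad(f,i)}·(D,I) = (λ⁻¹Dλ, λ̃ I λ̄ + δ_{λ⁻¹Dλ}(ρ)) with λ⁻¹ = e^f from the proof of the main theorem, expressed in the matrix model; it shows that every gauge transform of (D,I) is a trivial deformation, with change of coordinates λ and homotopy ρ.) -/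

import Mathlib

open NormedSpace

open Finset

/-- For `a b : A`, `T a b` is the 2×2 matrix `![![a, 0], ![b, a]]`. -/
def T {A : Type*} [Ring A] (a b : A) : Matrix (Fin 2) (Fin 2) A :=
  ![![a, 0], ![b, a]]

namespace Stmt5Aux

section RingPart

variable {A : Type*} [Ring A]

lemma T_mul (a b c d : A) : T a b * T c d = T (a * c) (b * c + a * d) := by
  ext x y
  fin_cases x <;> fin_cases y <;>
    simp [Matrix.mul_apply, Fin.sum_univ_two] <;> simp [T]

@[simp] lemma T_apply00 (a b : A) : T a b 0 0 = a := rfl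
@[simp] lemma T_apply01 (a b : A) : T a b 0 1 = 0 := rfl
@[simp] lemma T_apply10 (a b : A) : T a b 1 0 = b := rfl
@[simp] lemma T_apply11 (a b : A) : T a b 1 1 = a := rfl

/-- Partial "derivative" sums. -/
def S (f i : A) (n : ℕ) : A := ∑ k ∈ range n, f ^ k * i * f ^ (n - 1 - k)

lemma S_zero (f i : A) : S f i 0 = 0 := by simp [S]

lemma S_succ (f i : A) (n : ℕ) :
    S f i (n + 1) = ∑ k ∈ range (n + 1), f ^ k * i * f ^ (n - k) := by
  simp [S]

lemma S_rec (f i : A) (n : ℕ) : S f i (n + 1) = S f i n * f + f ^ n * i := by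
  rw [S_succ, sum_range_succ, Nat.sub_self, pow_zero, mul_one, S, sum_mul]
  congr 1
  refine sum_congr rfl fun k hk => ?_
  rw [mem_range] at hk
  have h1 : n - 1 - k + 1 = n - k := by omega
  rw [mul_assoc (f ^ k * i), ← pow_succ, h1]

lemma T_pow (f i : A) (n : ℕ) : T f i ^ n = T (f ^ n) (S f i n) := by
  induction n with
  | zero =>
    ext x y
    fin_cases x <;> fin_cases y <;> simp [S, Matrix.one_apply] <;> simp [T]
  | succ n ih =>
    rw [pow_succ, ih, T_mul, ← pow_succ, S_rec]

lemma T_neg (a b : A) : -(T a b) = T (-a) (-b) := by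
  ext x y
  fin_cases x <;> fin_cases y <;> simp [Matrix.neg_apply] <;> simp [T]

/-- Key combinatorial identity for commuting elements. -/
lemma key_sum {R : Type*} [Ring R] {x y : R} (h : Commute x y) (m : ℕ) :
    ∑ k ∈ range (m + 1), x ^ k * y ^ (m - k) =
      ∑ j ∈ range (m + 1), (m + 1).choose (j + 1) • ((x - y) ^ j * y ^ (m - j)) := by
  have hc : Commute (x - y) y := h.sub_left (Commute.refl y)
  calc
    ∑ k ∈ range (m + 1), x ^ k * y ^ (m - k)
        = ∑ k ∈ range (m + 1), ∑ j ∈ range (k + 1),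
            k.choose j • ((x - y) ^ j * y ^ (m - j)) := by
      refine sum_congr rfl fun k hk => ?_
      rw [mem_range, Nat.lt_succ_iff] at hk
      conv_lhs => rw [show x = x - y + y by abel, hc.add_pow, sum_mul]
      refine sum_congr rfl fun j hj => ?_
      rw [mem_range, Nat.lt_succ_iff] at hj
      have hy : y ^ (k - j) * y ^ (m - k) = y ^ (m - j) := by
        rw [← pow_add]; congr 1; omega
      rw [nsmul_eq_mul, ← hy, mul_assoc ((x - y) ^ j * y ^ (k - j)),
        (Nat.cast_commute (k.choose j) (y ^ (m - k))).eq,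
        ← mul_assoc ((x - y) ^ j * y ^ (k - j)), mul_assoc ((x - y) ^ j) (y ^ (k - j))]
      exact ((Nat.cast_commute (k.choose j) _).eq).symm
    _ = ∑ j ∈ range (m + 1), ∑ k ∈ Finset.Ico j (m + 1),
          k.choose j • ((x - y) ^ j * y ^ (m - j)) := by
      simp only [range_eq_Ico]
      exact (sum_Ico_Ico_comm 0 (m + 1)
        (fun j k => k.choose j • ((x - y) ^ j * y ^ (m - j)))).symm
    _ = ∑ j ∈ range (m + 1), (m + 1).choose (j + 1) • ((x - y) ^ j * y ^ (m - j)) := by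
      refine sum_congr rfl fun j hj => ?_
      rw [← Finset.sum_smul, Finset.Ico_add_one_right_eq_Icc, Nat.sum_Icc_choose]

end RingPart

section EndPart

variable {A : Type*} [Ring A] [Algebra ℂ A]

lemma coe_sub_mul (f : A) :
    ⇑(LinearMap.mulLeft ℂ f - LinearMap.mulRight ℂ f) = fun x => ⁅f, x⁆ := by
  funext x
  simp [Ring.lie_def]

lemma adPow_apply (f i : A) (j : ℕ) :
    ((LinearMap.mulLeft ℂ f - LinearMap.mulRight ℂ f) ^ j) i =
      (fun x => ⁅f, x⁆)^[j] i := by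
  rw [Module.End.pow_apply, coe_sub_mul]

lemma negadPow_apply (f i : A) (j : ℕ) :
    ((LinearMap.mulRight ℂ f - LinearMap.mulLeft ℂ f) ^ j) i =
      (-1 : ℂ) ^ j • (fun x => ⁅f, x⁆)^[j] i := by
  induction j with
  | zero => simp
  | succ j ih =>
    rw [pow_succ', Module.End.mul_apply, ih, map_smul, Function.iterate_succ_apply']
    rw [LinearMap.sub_apply, LinearMap.mulRight_apply, LinearMap.mulLeft_apply,
      pow_succ, mul_smul]
    congr 1
    rw [neg_one_smul, Ring.lie_def, neg_sub]

lemma finite_left (f i : A) (m : ℕ) :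
    ∑ k ∈ range (m + 1), f ^ k * i * f ^ (m - k) =
      ∑ j ∈ range (m + 1),
        (m + 1).choose (j + 1) • ((fun x => ⁅f, x⁆)^[j] i * f ^ (m - j)) := by
  set u := LinearMap.mulLeft ℂ f with hu
  set v := LinearMap.mulRight ℂ f with hv
  have huv : Commute u v := LinearMap.commute_mulLeft_right f f
  have hc : Commute (u - v) v := huv.sub_left (Commute.refl v)
  have h : ∑ k ∈ range (m + 1), u ^ k * v ^ (m - k)
      = ∑ j ∈ range (m + 1), (m + 1).choose (j + 1) • (v ^ (m - j) * (u - v) ^ j) := by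
    rw [key_sum huv m]
    exact sum_congr rfl fun j _ => by rw [(hc.pow_pow j (m - j)).eq]
  have h2 := congrFun (congrArg DFunLike.coe h) i
  simpa only [LinearMap.coe_sum, Finset.sum_apply, LinearMap.smul_apply,
    Module.End.mul_apply, hu, hv, LinearMap.pow_mulLeft, LinearMap.pow_mulRight,
    LinearMap.mulLeft_apply, LinearMap.mulRight_apply, adPow_apply,
    ← mul_assoc] using h2

lemma finite_right (f i : A) (m : ℕ) :
    ∑ k ∈ range (m + 1), f ^ k * i * f ^ (m - k) =
      ∑ j ∈ range (m + 1),
        (m + 1).choose (j + 1) •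
          ((-1 : ℂ) ^ j • (f ^ (m - j) * (fun x => ⁅f, x⁆)^[j] i)) := by
  set u := LinearMap.mulLeft ℂ f with hu
  set v := LinearMap.mulRight ℂ f with hv
  have huv : Commute v u := (LinearMap.commute_mulLeft_right f f).symm
  have hc : Commute (v - u) u := huv.sub_left (Commute.refl u)
  have h : ∑ k ∈ range (m + 1), v ^ k * u ^ (m - k)
      = ∑ j ∈ range (m + 1), (m + 1).choose (j + 1) • (u ^ (m - j) * (v - u) ^ j) := by
    rw [key_sum huv m]
    exact sum_congr rfl fun j _ => by rw [(hc.pow_pow j (m - j)).eq]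
  have h2 := congrFun (congrArg DFunLike.coe h) i
  simp only [LinearMap.coe_sum, Finset.sum_apply, LinearMap.smul_apply,
    Module.End.mul_apply, hu, hv, LinearMap.pow_mulLeft, LinearMap.pow_mulRight,
    LinearMap.mulLeft_apply, LinearMap.mulRight_apply, negadPow_apply] at h2
  calc
    ∑ k ∈ range (m + 1), f ^ k * i * f ^ (m - k)
        = ∑ k ∈ range (m + 1), f ^ (m - k) * i * f ^ k := by
      have := sum_range_reflect (fun k => f ^ k * i * f ^ (m - k)) (m + 1)
      rw [← this]
      refine sum_congr rfl fun k hk => ?_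
      rw [mem_range, Nat.lt_succ_iff] at hk
      have h1 : m + 1 - 1 - k = m - k := by omega
      have h2 : m - (m - k) = k := by omega
      rw [h1, h2]
    _ = ∑ j ∈ range (m + 1),
        (m + 1).choose (j + 1) •
          ((-1 : ℂ) ^ j • (f ^ (m - j) * (fun x => ⁅f, x⁆)^[j] i)) := by
      rw [h2]
      exact sum_congr rfl fun k _ => by rw [mul_smul_comm]

end EndPart

section Analytic

variable {A : Type*} [NormedRing A] [NormedAlgebra ℂ A] [CompleteSpace A]

lemma norm_adIter_le (f i : A) (l : ℕ) :
    ‖(fun x => ⁅f, x⁆)^[l] i‖ ≤ (2 * ‖f‖) ^ l * ‖i‖ := by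
  induction l with
  | zero => simp
  | succ l ih =>
    rw [Function.iterate_succ_apply', pow_succ']
    set z := (fun x => ⁅f, x⁆)^[l] i with hz
    calc ‖⁅f, z⁆‖ = ‖f * z - z * f‖ := by rw [Ring.lie_def]
      _ ≤ ‖f * z‖ + ‖z * f‖ := norm_sub_le _ _
      _ ≤ ‖f‖ * ‖z‖ + ‖z‖ * ‖f‖ := add_le_add (norm_mul_le _ _) (norm_mul_le _ _)
      _ = 2 * ‖f‖ * ‖z‖ := by ring
      _ ≤ 2 * ‖f‖ * ((2 * ‖f‖) ^ l * ‖i‖) :=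
          mul_le_mul_of_nonneg_left ih (by positivity)
      _ = 2 * ‖f‖ * (2 * ‖f‖) ^ l * ‖i‖ := by ring

lemma coef_norm_summable (f i : A) {c : ℕ → ℂ}
    (hc : ∀ l, ‖c l‖ ≤ ((l.factorial : ℝ))⁻¹) :
    Summable fun l => ‖c l • (fun x => ⁅f, x⁆)^[l] i‖ := by
  refine Summable.of_nonneg_of_le (fun l => norm_nonneg _) (fun l => ?_)
    ((Real.summable_pow_div_factorial (2 * ‖f‖)).mul_right ‖i‖)
  rw [norm_smul]
  calc ‖c l‖ * ‖(fun x => ⁅f, x⁆)^[l] i‖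
      ≤ ((l.factorial : ℝ))⁻¹ * ((2 * ‖f‖) ^ l * ‖i‖) :=
        mul_le_mul (hc l) (norm_adIter_le f i l) (norm_nonneg _) (by positivity)
    _ = (2 * ‖f‖) ^ l / (l.factorial : ℝ) * ‖i‖ := by ring

lemma hfac1 (l : ℕ) : ‖(((l + 1).factorial : ℂ))⁻¹‖ ≤ ((l.factorial : ℝ))⁻¹ := by
  rw [norm_inv, Complex.norm_natCast]
  have h : (l.factorial : ℝ) ≤ ((l + 1).factorial : ℝ) := by
    exact_mod_cast Nat.factorial_le (Nat.le_succ l)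
  have h0 : (0 : ℝ) < (l.factorial : ℝ) := by exact_mod_cast Nat.factorial_pos l
  gcongr

lemma hfac2 (l : ℕ) :
    ‖(-1 : ℂ) ^ l * (((l + 1).factorial : ℂ))⁻¹‖ ≤ ((l.factorial : ℝ))⁻¹ := by
  rw [norm_mul, norm_pow, norm_neg, norm_one, one_pow, one_mul]
  exact hfac1 l

lemma exp_T_aux (f i : A) :
    exp (T f i) = T (exp f) (exp (T f i) 1 0) ∧
      HasSum (fun n => ((n.factorial : ℂ))⁻¹ • S f i n) (exp (T f i) 1 0) := by
  letI : SeminormedRing (Matrix (Fin 2) (Fin 2) A) := Matrix.linftyOpSemiNormedRing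
  letI : NormedRing (Matrix (Fin 2) (Fin 2) A) := Matrix.linftyOpNormedRing
  letI : NormedAlgebra ℂ (Matrix (Fin 2) (Fin 2) A) := Matrix.linftyOpNormedAlgebra
  haveI : @CompleteSpace (Matrix (Fin 2) (Fin 2) A) PseudoMetricSpace.toUniformSpace :=
    inferInstanceAs (CompleteSpace (Fin 2 → Fin 2 → A))
  have hsum := exp_series_hasSum_exp' (𝕂 := ℂ) (T f i)
  have hE : ∀ a b : Fin 2, HasSum (fun n => ((n.factorial : ℂ))⁻¹ • (T f i ^ n) a b)
      (exp (T f i) a b) := by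
    intro a b
    have hcont : Continuous (fun M : Matrix (Fin 2) (Fin 2) A => M a b) :=
      (continuous_apply b).comp (continuous_apply a)
    have := hsum.map (AddMonoidHom.mk' (fun M : Matrix (Fin 2) (Fin 2) A => M a b)
      (fun M N => rfl)) hcont
    exact this
  have h00 : HasSum (fun n => ((n.factorial : ℂ))⁻¹ • f ^ n) (exp (T f i) 0 0) := by
    simpa [T_pow] using hE 0 0
  have h01 : HasSum (fun _ : ℕ => (0 : A)) (exp (T f i) 0 1) := by
    simpa [T_pow] using hE 0 1
  have h11 : HasSum (fun n => ((n.factorial : ℂ))⁻¹ • f ^ n) (exp (T f i) 1 1) := by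
    simpa [T_pow] using hE 1 1
  have h10 : HasSum (fun n => ((n.factorial : ℂ))⁻¹ • S f i n) (exp (T f i) 1 0) := by
    simpa [T_pow] using hE 1 0
  refine ⟨?_, h10⟩
  have e00 := h00.unique (exp_series_hasSum_exp' (𝕂 := ℂ) f)
  have e11 := h11.unique (exp_series_hasSum_exp' (𝕂 := ℂ) f)
  have e01 := h01.unique hasSum_zero
  ext a b
  fin_cases a <;> fin_cases b <;> simp [e00, e01, e11]

lemma coef_id {m j : ℕ} (hj : j ≤ m) :
    (((m + 1).factorial : ℂ))⁻¹ * ((m + 1).choose (j + 1) : ℂ) =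
      (((j + 1).factorial : ℂ))⁻¹ * (((m - j).factorial : ℂ))⁻¹ := by
  have h := Nat.choose_mul_factorial_mul_factorial (Nat.succ_le_succ hj)
  have hmj : m + 1 - (j + 1) = m - j := by omega
  rw [hmj] at h
  have hC : ((m + 1).choose (j + 1) : ℂ) * ((j + 1).factorial : ℂ) *
      ((m - j).factorial : ℂ) = ((m + 1).factorial : ℂ) := by exact_mod_cast h
  have f1 : ((m + 1).factorial : ℂ) ≠ 0 := Nat.cast_ne_zero.mpr (Nat.factorial_ne_zero _)
  have f2 : (((j + 1).factorial : ℂ)) ≠ 0 := Nat.cast_ne_zero.mpr (Nat.factorial_ne_zero _)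
  have f3 : (((m - j).factorial : ℂ)) ≠ 0 := Nat.cast_ne_zero.mpr (Nat.factorial_ne_zero _)
  field_simp
  linear_combination hC

lemma per_m_left (f i : A) (m : ℕ) :
    ∑ kl ∈ HasAntidiagonal.antidiagonal m,
        (((kl.1 + 1).factorial : ℂ))⁻¹ • (fun x => ⁅f, x⁆)^[kl.1] i *
          (((kl.2.factorial : ℂ))⁻¹ • f ^ kl.2) =
      (((m + 1).factorial : ℂ))⁻¹ • S f i (m + 1) := by
  rw [Finset.Nat.sum_antidiagonal_eq_sum_range_succ_mk, S_succ, finite_left f i m,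
    Finset.smul_sum]
  refine sum_congr rfl fun j hj => ?_
  rw [mem_range, Nat.lt_succ_iff] at hj
  rw [smul_mul_smul_comm, ← Nat.cast_smul_eq_nsmul ℂ, smul_smul, coef_id hj]

lemma per_m_right (f i : A) (m : ℕ) :
    ∑ kl ∈ HasAntidiagonal.antidiagonal m,
        ((kl.1.factorial : ℂ))⁻¹ • f ^ kl.1 *
          (((-1 : ℂ) ^ kl.2 * (((kl.2 + 1).factorial : ℂ))⁻¹) •
            (fun x => ⁅f, x⁆)^[kl.2] i) =
      (((m + 1).factorial : ℂ))⁻¹ • S f i (m + 1) := by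
  rw [Finset.Nat.sum_antidiagonal_eq_sum_range_succ_mk, S_succ, finite_right f i m,
    Finset.smul_sum,
    ← sum_range_reflect (fun j => (((m + 1).factorial : ℂ))⁻¹ •
      ((m + 1).choose (j + 1) •
        ((-1 : ℂ) ^ j • (f ^ (m - j) * (fun x => ⁅f, x⁆)^[j] i)))) (m + 1)]
  refine sum_congr rfl fun p hp => ?_
  rw [mem_range, Nat.lt_succ_iff] at hp
  have h1 : m + 1 - 1 - p = m - p := by omega
  have h2 : m - (m - p) = p := by omega
  have hco := coef_id (show m - p ≤ m by omega)
  rw [h2] at hco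
  rw [h1, h2, smul_mul_smul_comm, ← Nat.cast_smul_eq_nsmul ℂ, smul_smul, smul_smul, hco]
  congr 1
  ring

lemma g_left (f i : A) :
    exp (T f i) 1 0 =
      (∑' l : ℕ, (((l + 1).factorial : ℂ))⁻¹ • (fun x => ⁅f, x⁆)^[l] i) * exp f := by
  obtain ⟨-, hg⟩ := exp_T_aux f i
  have hrhs : (∑' l : ℕ, (((l + 1).factorial : ℂ))⁻¹ • (fun x => ⁅f, x⁆)^[l] i) * exp f
      = ∑' m : ℕ, (((m + 1).factorial : ℂ))⁻¹ • S f i (m + 1) := by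
    rw [exp_eq_tsum (𝕂 := ℂ),
      tsum_mul_tsum_eq_tsum_sum_antidiagonal_of_summable_norm
        (coef_norm_summable f i hfac1) (norm_expSeries_summable' (𝕂 := ℂ) f)]
    exact tsum_congr fun m => per_m_left f i m
  rw [hrhs, ← hg.tsum_eq, Summable.tsum_eq_zero_add hg.summable, S_zero, smul_zero, zero_add]

lemma g_right (f i : A) :
    exp (T f i) 1 0 =
      exp f * ∑' l : ℕ, ((-1 : ℂ) ^ l * (((l + 1).factorial : ℂ))⁻¹) •
        (fun x => ⁅f, x⁆)^[l] i := by
  obtain ⟨-, hg⟩ := exp_T_aux f i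
  have hrhs : (exp f * ∑' l : ℕ, ((-1 : ℂ) ^ l * (((l + 1).factorial : ℂ))⁻¹) •
        (fun x => ⁅f, x⁆)^[l] i)
      = ∑' m : ℕ, (((m + 1).factorial : ℂ))⁻¹ • S f i (m + 1) := by
    rw [exp_eq_tsum (𝕂 := ℂ),
      tsum_mul_tsum_eq_tsum_sum_antidiagonal_of_summable_norm
        (norm_expSeries_summable' (𝕂 := ℂ) f) (coef_norm_summable f i hfac2)]
    exact tsum_congr fun m => per_m_right f i m
  rw [hrhs, ← hg.tsum_eq, Summable.tsum_eq_zero_add hg.summable, S_zero, smul_zero, zero_add]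

lemma adIter_neg (f i : A) (l : ℕ) :
    (fun x => ⁅-f, x⁆)^[l] (-i) = -((-1 : ℂ) ^ l • (fun x => ⁅f, x⁆)^[l] i) := by
  induction l with
  | zero => simp
  | succ l ih =>
    rw [Function.iterate_succ_apply', ih, Function.iterate_succ_apply']
    simp only [Ring.lie_def, pow_succ, mul_neg_one, neg_smul, mul_smul_comm, smul_mul_assoc,
      smul_sub, neg_mul, mul_neg, neg_neg, smul_neg, neg_sub, mul_one]
    abel

end Analytic

end Stmt5Aux

open Stmt5Aux

/-- The gauge transform of `(D, I)` is a trivial deformation: with `M = T f i`,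
`P = T D I` and homotopy `ρ = -∑'_{l} ((l+1)!)⁻¹ • (ad f)^[l] i`, one has
`exp M * P * exp (-M) = ![![eᶠDe⁻ᶠ, 0], ![eᶠIe⁻ᶠ + ⁅eᶠDe⁻ᶠ, ρ⁆, eᶠDe⁻ᶠ]]`. -/
theorem stmt5 {A : Type*} [NormedRing A] [NormedAlgebra ℂ A] [CompleteSpace A]
    (f i D I : A) :
    exp (T f i) * T D I * exp (-(T f i)) =
      let ρ : A := -∑' l : ℕ, (((l + 1).factorial : ℂ))⁻¹ • (fun x => ⁅f, x⁆)^[l] i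
      ![![exp f * D * exp (-f), 0],
        ![exp f * I * exp (-f) + ⁅exp f * D * exp (-f), ρ⁆,
          exp f * D * exp (-f)]] := by
  show exp (T f i) * T D I * exp (-(T f i)) =
    T (exp f * D * exp (-f))
      (exp f * I * exp (-f) +
        ⁅exp f * D * exp (-f),
          -∑' l : ℕ, (((l + 1).factorial : ℂ))⁻¹ • (fun x => ⁅f, x⁆)^[l] i⁆)
  set σ : A := ∑' l : ℕ, (((l + 1).factorial : ℂ))⁻¹ • (fun x => ⁅f, x⁆)^[l] i with hσ
  obtain ⟨hM, -⟩ := exp_T_aux f i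
  obtain ⟨hN, -⟩ := exp_T_aux (-f) (-i)
  have hg : exp (T f i) 1 0 = σ * exp f := g_left f i
  have hh : exp (T (-f) (-i)) 1 0 = exp (-f) * -σ := by
    rw [g_right (-f) (-i)]
    congr 1
    rw [hσ, ← tsum_neg]
    refine tsum_congr fun l => ?_
    have hs : ((-1 : ℂ) ^ l) * ((-1 : ℂ) ^ l) = 1 := by
      rw [← pow_add]; exact Even.neg_one_pow ⟨l, rfl⟩
    rw [adIter_neg, smul_neg, smul_smul,
      show ((-1 : ℂ) ^ l * (((l + 1).factorial : ℂ))⁻¹) * (-1 : ℂ) ^ l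
          = (((l + 1).factorial : ℂ))⁻¹ by
        rw [mul_comm ((-1 : ℂ) ^ l) ((((l + 1).factorial : ℂ))⁻¹), mul_assoc, hs, mul_one]]
  rw [T_neg, hM, hN, hg, hh, T_mul, T_mul]
  have h2 : (σ * exp f * D + exp f * I) * exp (-f) + exp f * D * (exp (-f) * -σ)
      = exp f * I * exp (-f) + ⁅exp f * D * exp (-f), -σ⁆ := by
    rw [Ring.lie_def]
    noncomm_ring
  rw [h2]
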